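/- Let V be an n-dimensional vector space over the field F_2 of 2 elements with n ≥ 3 and fixed basis {b_1,...,b_n}. Then the set T_1 = {b_1,...,b_n} of basis vectors is a locating-dominating set of Γ(V). -/

import Mathlib

/-- A set `L` is a locating-dominating set of `G` if for every two distinct
vertices `u, v ∉ L` we have `∅ ≠ N(u) ∩ L ≠ N(v) ∩ L ≠ ∅`. -/
def IsLocDom {α : Type*} (G : SimpleGraph α) (L : Set α) : Prop :=
  ∀ ⦃u v : α⦄, u ∉ L → v ∉ L → u ≠ v →
    G.neighborSet u ∩ L ≠ ∅ ∧
    G.neighborSet u ∩ L ≠ G.neighborSet v ∩ L ∧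
    G.neighborSet v ∩ L ≠ ∅

/-- A set `C` is an identifying code of `G` if `N[u] ∩ C ≠ N[v] ∩ C`
for all distinct vertices `u, v`. -/
def IsIdCode {α : Type*} (G : SimpleGraph α) (C : Set α) : Prop :=
  ∀ ⦃u v : α⦄, u ≠ v →
    insert u (G.neighborSet u) ∩ C ≠ insert v (G.neighborSet v) ∩ C

/-- The location-domination number: minimum cardinality of a locating-dominating set. -/
noncomputable def locDomNum {α : Type*} (G : SimpleGraph α) : ℕ :=
  sInf {k : ℕ | ∃ L : Set α, IsLocDom G L ∧ L.ncard = k}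

/-- The identifying number: minimum cardinality of an identifying code. -/
noncomputable def idNum {α : Type*} (G : SimpleGraph α) : ℕ :=
  sInf {k : ℕ | ∃ C : Set α, IsIdCode G C ∧ C.ncard = k}
/-- The non-zero component graph of a vector space `W` with respect to a fixed
basis `b`: vertices are the non-zero vectors, and two distinct vertices are
adjacent iff some basis vector has non-zero coefficient in both of their
representations. -/
def nzcGraph {F W : Type*} [Field F] [AddCommGroup W] [Module F W] {n : ℕ}
    (b : Module.Basis (Fin n) F W) : SimpleGraph {w : W // w ≠ 0} where
  Adj u v := u ≠ v ∧ ∃ i, b.repr u.1 i ≠ 0 ∧ b.repr v.1 i ≠ 0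
  symm := ⟨by
    rintro u v ⟨h, i, hu, hv⟩
    exact ⟨h.symm, i, hv, hu⟩⟩
  loopless := ⟨by
    rintro u ⟨h, -⟩
    exact h rfl⟩

/-- `Tset b i` is the class `Tᵢ` of non-zero vectors having exactly `i`
non-zero coefficients in their representation w.r.t. the basis `b`. -/
def Tset {F W : Type*} [Field F] [AddCommGroup W] [Module F W] {n : ℕ}
    (b : Module.Basis (Fin n) F W) (i : ℕ) : Set {w : W // w ≠ 0} :=
  {v | (b.repr v.1).support.card = i}

/-- For `n ≥ 3` over `F₂`, the set `T₁` of basis vectors is a locating-dominating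
set of `Γ(V)`. -/
theorem stmt_10 {F W : Type*} [Field F] [Fintype F] (hq : Fintype.card F = 2)
    [AddCommGroup W] [Module F W] {n : ℕ} (hn : 3 ≤ n) (b : Module.Basis (Fin n) F W) :
    Tset b 1 = {v : {w : W // w ≠ 0} | v.1 ∈ Set.range b} ∧
      IsLocDom (nzcGraph b) (Tset b 1) := by

  have h01 : ∀ x : F, x = 0 ∨ x = 1 := by
    classical
    intro x
    have h0 : (0:F) ≠ 1 := zero_ne_one
    have huniv : (Finset.univ : Finset F) = ({0, 1} : Finset F) := by
      symm
      apply Finset.eq_of_subset_of_card_le (Finset.subset_univ _)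
      rw [Finset.card_univ, hq, Finset.card_insert_of_notMem (by simp [h0]),
        Finset.card_singleton]
    have hx := Finset.mem_univ x
    rw [huniv] at hx
    simpa using hx
  have hbne : ∀ i : Fin n, b i ≠ 0 := fun i => b.ne_zero i
  have hT1 : Tset b 1 = {v : {w : W // w ≠ 0} | v.1 ∈ Set.range b} := by
    ext v
    simp only [Tset, Set.mem_setOf_eq, Set.mem_range]
    constructor
    · intro hc
      obtain ⟨i, hi⟩ := Finset.card_eq_one.mp hc
      refine ⟨i, ?_⟩
      have hrepr : b.repr v.1 = Finsupp.single i 1 := by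
        ext j
        by_cases hj : j = i
        · subst hj
          have hmem : j ∈ (b.repr v.1).support := by rw [hi]; simp
          have hne0 := Finsupp.mem_support_iff.mp hmem
          rcases h01 (b.repr v.1 j) with h | h
          · exact absurd h hne0
          · simp [h]
        · have hnm : j ∉ (b.repr v.1).support := by rw [hi]; simp [hj]
          simp [Finsupp.notMem_support_iff.mp hnm, Finsupp.single_apply, Ne.symm hj, hj]
      have := b.repr.injective (hrepr.trans (b.repr_self i).symm)
      exact this.symm
    · rintro ⟨i, hi⟩
      rw [← hi, b.repr_self, Finsupp.support_single_ne_zero i one_ne_zero]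
      simp [Tset]
  refine ⟨hT1, ?_⟩
  have hmemN : ∀ (u : {w : W // w ≠ 0}), u ∉ Tset b 1 → ∀ i : Fin n,
      (⟨b i, hbne i⟩ : {w : W // w ≠ 0}) ∈ (nzcGraph b).neighborSet u ∩ Tset b 1 ↔
        b.repr u.1 i ≠ 0 := by
    intro u hu i
    have hTi : (⟨b i, hbne i⟩ : {w : W // w ≠ 0}) ∈ Tset b 1 := by
      simp [Tset, b.repr_self, Finsupp.support_single_ne_zero i one_ne_zero]
    constructor
    · rintro ⟨⟨-, j, huj, hbj⟩, -⟩
      have hji : j = i := by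
        by_contra hji
        simp only [b.repr_self, Finsupp.single_apply] at hbj
        exact hbj (if_neg (fun h => hji h.symm))
      rwa [← hji]
    · intro hui
      refine ⟨⟨?_, i, hui, by simp [b.repr_self]⟩, hTi⟩
      intro h
      exact hu (h ▸ hTi)
  have hsupp : ∀ (u v : {w : W // w ≠ 0}), u ∉ Tset b 1 → v ∉ Tset b 1 →
      (nzcGraph b).neighborSet u ∩ Tset b 1 = (nzcGraph b).neighborSet v ∩ Tset b 1 →
      u = v := by
    intro u v hu hv heq
    have hrepr : b.repr u.1 = b.repr v.1 := by
      ext i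
      rcases h01 (b.repr u.1 i) with h | h <;> rcases h01 (b.repr v.1 i) with h' | h'
      · rw [h, h']
      · exfalso
        have hv1 : (⟨b i, hbne i⟩ : {w : W // w ≠ 0}) ∈
            (nzcGraph b).neighborSet v ∩ Tset b 1 :=
          (hmemN v hv i).mpr (by rw [h']; exact one_ne_zero)
        rw [← heq] at hv1
        exact (hmemN u hu i).mp hv1 h
      · exfalso
        have hu1 : (⟨b i, hbne i⟩ : {w : W // w ≠ 0}) ∈
            (nzcGraph b).neighborSet u ∩ Tset b 1 :=
          (hmemN u hu i).mpr (by rw [h]; exact one_ne_zero)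
        rw [heq] at hu1
        exact (hmemN v hv i).mp hu1 h'
      · rw [h, h']
    exact Subtype.ext (b.repr.injective hrepr)
  have hnonempty : ∀ (u : {w : W // w ≠ 0}), u ∉ Tset b 1 →
      (nzcGraph b).neighborSet u ∩ Tset b 1 ≠ ∅ := by
    intro u hu
    have : ∃ i, b.repr u.1 i ≠ 0 := by
      by_contra hc
      push_neg at hc
      have : b.repr u.1 = 0 := Finsupp.ext hc
      have : u.1 = 0 := by
        have := congrArg b.repr.symm this
        simpa using this
      exact u.2 this
    obtain ⟨i, hi⟩ := this
    exact Set.nonempty_iff_ne_empty.mp ⟨_, (hmemN u hu i).mpr hi⟩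
  intro u v hu hv hne
  exact ⟨hnonempty u hu, fun h => hne (hsupp u v hu hv h), hnonempty v hv⟩
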